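/- Let γ > 0, c > 0 with 2c < γ, and set δ = √(γ² - 2cγ). Then for p ≤ t, the function u₁(t) = (b/c)(γ-δ) e^{-δ(t-p)} satisfies the integral equation u₁(t) = b e^{-γ(t-p)} + c ∫_p^∞ e^{-γ|t-s|} u₁(s) ds for every b ≥ 0. -/

import Mathlib

open Real MeasureTheory

open Set in

lemma aux_exp_mul_hasDerivAt (k x : ℝ) (hk : k ≠ 0) :
    HasDerivAt (fun y => Real.exp (k * y) / k) (Real.exp (k * x)) x := by
  have h : HasDerivAt (fun y => Real.exp (k * y)) (Real.exp (k * x) * k) x := by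
    simpa using (((hasDerivAt_id x).const_mul k).exp)
  simpa [mul_div_assoc, mul_div_cancel_right₀ _ hk] using h.div_const k

lemma aux_int_exp_mul (k a b : ℝ) (hk : k ≠ 0) :
    ∫ x in a..b, Real.exp (k * x) = (Real.exp (k * b) - Real.exp (k * a)) / k := by
  rw [intervalIntegral.integral_eq_sub_of_hasDerivAt
    (fun x _ => aux_exp_mul_hasDerivAt k x hk)
    ((Real.continuous_exp.comp (continuous_const.mul continuous_id)).intervalIntegrable a b)]
  ring

lemma aux_int_exp_neg_mul_Ioi (k a : ℝ) (hk : 0 < k) :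
    ∫ x in Set.Ioi a, Real.exp (-(k * x)) = Real.exp (-(k * a)) / k := by
  have hderiv : ∀ x ∈ Set.Ici a, HasDerivAt (fun y => -Real.exp (-(k * y)) / k)
      (Real.exp (-(k * x))) x := by
    intro x _
    have h : HasDerivAt (fun y => Real.exp (-(k * y))) (Real.exp (-(k * x)) * (-k)) x := by
      simpa using (((hasDerivAt_id x).const_mul k).neg.exp)
    have h2 := (h.neg).div_const k
    have he : Real.exp (-(k * x)) = -(Real.exp (-(k * x)) * -k) / k := by field_simp
    rw [he]; exact h2
  have hint : IntegrableOn (fun x => Real.exp (-(k * x))) (Set.Ioi a) := by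
    simpa [neg_mul] using exp_neg_integrableOn_Ioi a hk
  have htend : Filter.Tendsto (fun y => -Real.exp (-(k * y)) / k) Filter.atTop (nhds 0) := by
    have : Filter.Tendsto (fun y => Real.exp (-(k * y))) Filter.atTop (nhds 0) := by
      have h1 : Filter.Tendsto (fun y : ℝ => -(k * y)) Filter.atTop Filter.atBot := by
        refine Filter.tendsto_neg_atBot_iff.mpr ?_
        exact Filter.Tendsto.const_mul_atTop hk Filter.tendsto_id
      exact Real.tendsto_exp_atBot.comp h1
    simpa using (this.neg.div_const k)
  rw [MeasureTheory.integral_Ioi_of_hasDerivAt_of_tendsto' hderiv hint htend]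
  ring

lemma aux_int_exp_neg_mul_Ioi' (k a : ℝ) (hk : 0 < k) :
    ∫ x in Set.Ioi a, Real.exp (-k * x) = Real.exp (-k * a) / k := by
  simpa [neg_mul] using aux_int_exp_neg_mul_Ioi k a hk

/-- The function `u₁(t) = (b/c)(γ-δ) e^{-δ(t-p)}` solves the integral equation
`u₁(t) = b e^{-γ(t-p)} + c ∫_p^∞ e^{-γ|t-s|} u₁(s) ds` on `[p, ∞)`. -/
theorem u1_integral_equation
    (γ c p : ℝ) (hγ : 0 < γ) (hc : 0 < c) (h2c : 2 * c < γ)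
    (δ : ℝ) (hδ : δ = Real.sqrt (γ ^ 2 - 2 * c * γ)) :
    ∀ b : ℝ, 0 ≤ b → ∀ t : ℝ, p ≤ t →
      (b / c) * (γ - δ) * Real.exp (-δ * (t - p))
        = b * Real.exp (-γ * (t - p))
          + c * ∫ s in Set.Ici p,
              Real.exp (-γ * |t - s|) * ((b / c) * (γ - δ) * Real.exp (-δ * (s - p))) := by
  intro b hb t ht
  set K : ℝ := (b / c) * (γ - δ) with hK
  -- basic facts about δ
  have hsq_nonneg : (0:ℝ) ≤ γ ^ 2 - 2 * c * γ := by nlinarith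
  have hδ0 : 0 ≤ δ := hδ ▸ Real.sqrt_nonneg _
  have hδ2 : δ ^ 2 = γ ^ 2 - 2 * c * γ := by
    rw [hδ, sq_sqrt hsq_nonneg]
  have hδlt : δ < γ := by nlinarith [sq_nonneg (γ - δ), sq_nonneg (γ + δ)]
  have hgd : (0:ℝ) < γ - δ := by linarith
  have hgs : (0:ℝ) < γ + δ := by linarith
  -- the integrand
  set g : ℝ → ℝ := fun s => Real.exp (-γ * |t - s|) * (K * Real.exp (-δ * (s - p))) with hg
  have hgcont : Continuous g := by
    apply Continuous.mul
    · exact Real.continuous_exp.comp (continuous_const.mul ((continuous_const.sub continuous_id).abs))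
    · exact continuous_const.mul (Real.continuous_exp.comp (continuous_const.mul (continuous_id.sub continuous_const)))
  -- integrability on Ioi t
  have h_tail_eq : ∀ s ∈ Set.Ioi t, g s = (K * Real.exp (γ * t + δ * p)) * Real.exp (-(γ + δ) * s) := by
    intro s hs
    have : |t - s| = s - t := by rw [abs_sub_comm]; exact abs_of_nonneg (by linarith [hs.out])
    rw [hg]; dsimp only
    rw [this]
    have h : Real.exp (-γ * (s - t)) * Real.exp (-δ * (s - p))
        = Real.exp (γ * t + δ * p) * Real.exp (-(γ + δ) * s) := by
      rw [← Real.exp_add, ← Real.exp_add]; congr 1; ring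
    linear_combination K * h
  have h_tail_int : IntegrableOn g (Set.Ioi t) := by
    have h1 : IntegrableOn (fun s => Real.exp (-(γ + δ) * s)) (Set.Ioi t) :=
      exp_neg_integrableOn_Ioi t hgs
    have h2 : IntegrableOn (fun s => (K * Real.exp (γ * t + δ * p)) * Real.exp (-(γ + δ) * s))
        (Set.Ioi t) := h1.const_mul _
    exact MeasureTheory.IntegrableOn.congr_fun h2 (fun s hs => (h_tail_eq s hs).symm)
      measurableSet_Ioi
  -- split the integral
  have hsplit : ∫ s in Set.Ici p, g s = (∫ s in Set.Ioc p t, g s) + ∫ s in Set.Ioi t, g s := by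
    rw [MeasureTheory.integral_Ici_eq_integral_Ioi, ← Set.Ioc_union_Ioi_eq_Ioi ht]
    exact MeasureTheory.setIntegral_union (Set.Ioc_disjoint_Ioi le_rfl) measurableSet_Ioi
      (hgcont.integrableOn_Ioc) h_tail_int
  -- compute the middle piece
  have hmid : ∫ s in Set.Ioc p t, g s
      = (K * Real.exp (-γ * t + δ * p)) *
          ((Real.exp ((γ - δ) * t) - Real.exp ((γ - δ) * p)) / (γ - δ)) := by
    rw [← intervalIntegral.integral_of_le ht]
    have : ∀ s ∈ Set.uIcc p t, g s = (K * Real.exp (-γ * t + δ * p)) * Real.exp ((γ - δ) * s) := by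
      intro s hs
      rw [Set.uIcc_of_le ht] at hs
      have habs : |t - s| = t - s := abs_of_nonneg (by linarith [hs.2])
      rw [hg]; dsimp only
      rw [habs]
      have h : Real.exp (-γ * (t - s)) * Real.exp (-δ * (s - p))
          = Real.exp (-γ * t + δ * p) * Real.exp ((γ - δ) * s) := by
        rw [← Real.exp_add, ← Real.exp_add]; congr 1; ring
      linear_combination K * h
    rw [intervalIntegral.integral_congr this, intervalIntegral.integral_const_mul,
      aux_int_exp_mul _ _ _ hgd.ne']
  -- compute the tail piece
  have htail : ∫ s in Set.Ioi t, g s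
      = (K * Real.exp (γ * t + δ * p)) * (Real.exp (-(γ + δ) * t) / (γ + δ)) := by
    rw [MeasureTheory.setIntegral_congr_fun measurableSet_Ioi h_tail_eq,
      MeasureTheory.integral_const_mul, aux_int_exp_neg_mul_Ioi' _ _ hgs]
  -- put things together
  rw [hsplit, hmid, htail]
  have e1 : Real.exp (-γ * t + δ * p) * Real.exp ((γ - δ) * t) = Real.exp (-δ * (t - p)) := by
    rw [← Real.exp_add]; congr 1; ring
  have e2 : Real.exp (-γ * t + δ * p) * Real.exp ((γ - δ) * p) = Real.exp (-γ * (t - p)) := by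
    rw [← Real.exp_add]; congr 1; ring
  have e3 : Real.exp (γ * t + δ * p) * Real.exp (-(γ + δ) * t) = Real.exp (-δ * (t - p)) := by
    rw [← Real.exp_add]; congr 1; ring
  set x := Real.exp (-δ * (t - p)) with hx
  set y := Real.exp (-γ * (t - p)) with hy
  have hA : K * Real.exp (-γ * t + δ * p) *
      ((Real.exp ((γ - δ) * t) - Real.exp ((γ - δ) * p)) / (γ - δ)) = K * (x - y) / (γ - δ) := by
    linear_combination (K / (γ - δ)) * e1 - (K / (γ - δ)) * e2
  have hB : K * Real.exp (γ * t + δ * p) * (Real.exp (-(γ + δ) * t) / (γ + δ))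
      = K * x / (γ + δ) := by
    linear_combination (K / (γ + δ)) * e3
  rw [hA, hB, hK]
  have key : (γ - δ) * (γ + δ) = 2 * c * γ := by linear_combination -hδ2
  field_simp
  linear_combination (b * x) * key
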